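/- The weak left topological center of the bidual of c₀ equals c₀: identifying c₀** with ℓ∞ (with pointwise product, which is the Arens product), an element f ∈ ℓ∞ has the property that multiplication by f is weak*-to-weak continuous on ℓ∞ if and only if f ∈ c₀. -/

import Mathlib

open Filter Topology

noncomputable section

/-- `ℓ∞` of real sequences. -/
abbrev Linfty : Type := lp (fun _ : ℕ => ℝ) ⊤

/-- `ℓ¹` of real sequences. -/
abbrev Lone : Type := lp (fun _ : ℕ => ℝ) 1

/-- The weak-* topology on `ℓ∞`, viewed as the dual of `ℓ¹` via the pairing
`⟨g, x⟩ = ∑ᵢ g i * x i`. -/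
def wstarTop : TopologicalSpace Linfty :=
  ⨅ x : Lone, TopologicalSpace.induced
    (fun g : Linfty => ∑' i, (g : ℕ → ℝ) i * (x : ℕ → ℝ) i) inferInstance

/-- The weak topology on `ℓ∞`, induced by all continuous linear functionals. -/
def weakTop : TopologicalSpace Linfty :=
  ⨅ φ : StrongDual ℝ Linfty, TopologicalSpace.induced (fun g : Linfty => φ g) inferInstance

lemma lone_summable (x : Lone) : Summable fun i => ‖(x : ℕ → ℝ) i‖ := by
  have h := (lp.memℓp x).summable (p := 1) (by norm_num)
  simpa using h

lemma tendsto_wstar {ι : Type*} {l : Filter ι} {F : ι → Linfty} {a : Linfty} :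
    Tendsto F l (@nhds _ wstarTop a) ↔
      ∀ x : Lone, Tendsto (fun k => ∑' i, (F k : ℕ → ℝ) i * (x : ℕ → ℝ) i) l
        (𝓝 (∑' i, (a : ℕ → ℝ) i * (x : ℕ → ℝ) i)) := by
  unfold wstarTop
  rw [_root_.nhds_iInf, tendsto_iInf]
  refine forall_congr' fun x => ?_
  rw [nhds_induced, tendsto_comap_iff]
  rfl

lemma tendsto_weak {ι : Type*} {l : Filter ι} {F : ι → Linfty} {a : Linfty} :
    Tendsto F l (@nhds _ weakTop a) ↔
      ∀ φ : StrongDual ℝ Linfty, Tendsto (fun k => φ (F k)) l (𝓝 (φ a)) := by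
  unfold weakTop
  rw [_root_.nhds_iInf, tendsto_iInf]
  refine forall_congr' fun φ => ?_
  rw [nhds_induced, tendsto_comap_iff]
  rfl

lemma coe_sum_single (c : ℕ → ℝ) (s : Finset ℕ) (j : ℕ) :
    ((∑ i ∈ s, lp.single ⊤ i (c i) : Linfty) : ℕ → ℝ) j = if j ∈ s then c j else 0 := by
  rw [lp.coeFn_sum, Finset.sum_apply]
  by_cases hj : j ∈ s
  · rw [if_pos hj]
    exact (Finset.sum_eq_single_of_mem j hj
      (fun i _ hij => lp.single_apply_ne (E := fun _ : ℕ => ℝ) ⊤ i (c i) (Ne.symm hij))).trans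
      (lp.single_apply_self (E := fun _ : ℕ => ℝ) ⊤ j (c j))
  · rw [if_neg hj]
    exact Finset.sum_eq_zero fun i hi =>
      lp.single_apply_ne (E := fun _ : ℕ => ℝ) ⊤ i (c i) (fun hji => hj (hji ▸ hi))

lemma phi_single (φ : StrongDual ℝ Linfty) (i : ℕ) (c : ℝ) :
    φ (lp.single ⊤ i c) = c * φ (lp.single ⊤ i (1 : ℝ)) := by
  have : lp.single (E := fun _ : ℕ => ℝ) ⊤ i c = c • lp.single ⊤ i (1 : ℝ) := by
    rw [← lp.single_smul]
    norm_num
  rw [this, map_smul]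
  rfl

/-- Any continuous functional on `ℓ∞` is represented by an `ℓ¹` sequence on
elements tending to zero. -/
lemma phi_repr (φ : StrongDual ℝ Linfty) :
    ∃ x : Lone, ∀ h : Linfty, Tendsto (h : ℕ → ℝ) atTop (𝓝 0) →
      φ h = ∑' i, (h : ℕ → ℝ) i * (x : ℕ → ℝ) i := by
  set x' : ℕ → ℝ := fun i => φ (lp.single ⊤ i (1 : ℝ)) with hx'
  -- finite partial sums of |x'| are bounded by ‖φ‖
  have key : ∀ s : Finset ℕ, ∑ i ∈ s, |x' i| ≤ ‖φ‖ := by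
    intro s
    set sgn : ℝ → ℝ := fun t => if t < 0 then -1 else 1 with hsgn
    have hsgn_abs : ∀ t : ℝ, sgn t * t = |t| := by
      intro t
      by_cases ht : t < 0
      · simp [hsgn, ht, abs_of_neg ht]
      · simp [hsgn, ht, abs_of_nonneg (not_lt.mp ht)]
    set u : Linfty := ∑ i ∈ s, lp.single ⊤ i (sgn (x' i)) with hu
    have hunorm : ‖u‖ ≤ 1 := by
      refine lp.norm_le_of_forall_le zero_le_one fun j => ?_
      rw [hu, coe_sum_single]
      by_cases hj : j ∈ s
      · rw [if_pos hj]
        by_cases h0 : x' j < 0 <;> simp [hsgn, h0]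
      · simp [hj]
    have hφu : φ u = ∑ i ∈ s, |x' i| := by
      rw [hu, map_sum]
      refine Finset.sum_congr rfl fun i _ => ?_
      rw [phi_single, hsgn_abs]
    calc ∑ i ∈ s, |x' i| = φ u := hφu.symm
      _ ≤ ‖φ u‖ := le_abs_self _
      _ ≤ ‖φ‖ * ‖u‖ := φ.le_opNorm u
      _ ≤ ‖φ‖ * 1 := by
          exact mul_le_mul_of_nonneg_left hunorm (norm_nonneg φ)
      _ = ‖φ‖ := mul_one _
  have hxs : Summable fun i => |x' i| :=
    summable_of_sum_le (fun _ => abs_nonneg _) key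
  have hx1 : Memℓp x' 1 := memℓp_gen (by simpa using hxs)
  refine ⟨⟨x', hx1⟩, fun h hh => ?_⟩
  have hcoe : ((⟨x', hx1⟩ : Lone) : ℕ → ℝ) = x' := rfl
  rw [hcoe]
  -- summability of the pairing
  have hsum : Summable fun i => (h : ℕ → ℝ) i * x' i := by
    refine Summable.of_norm (Summable.of_nonneg_of_le (fun i => norm_nonneg _)
      (fun i => ?_) (hxs.mul_left ‖h‖))
    rw [norm_mul]
    have h1 : ‖(h : ℕ → ℝ) i‖ ≤ ‖h‖ := lp.norm_apply_le_norm ENNReal.top_ne_zero h i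
    have h2 : ‖x' i‖ = |x' i| := rfl
    rw [h2]
    exact mul_le_mul_of_nonneg_right h1 (abs_nonneg _)
  -- truncations converge in norm
  set T : ℕ → Linfty := fun n => ∑ i ∈ Finset.range n, lp.single ⊤ i ((h : ℕ → ℝ) i) with hT
  have hTlim : Tendsto T atTop (𝓝 h) := by
    rw [Metric.tendsto_atTop]
    intro ε hε
    obtain ⟨N, hN⟩ := (NormedAddCommGroup.tendsto_atTop.mp hh) (ε / 2) (by linarith)
    refine ⟨N, fun n hn => ?_⟩
    rw [dist_eq_norm]
    have hb : ‖T n - h‖ ≤ ε / 2 := by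
      refine lp.norm_le_of_forall_le (by linarith) fun j => ?_
      have : ((T n - h : Linfty) : ℕ → ℝ) j = (T n : ℕ → ℝ) j - (h : ℕ → ℝ) j := by
        rw [lp.coeFn_sub]; rfl
      rw [show ‖((T n - h : Linfty) : ℕ → ℝ) j‖ = |(T n : ℕ → ℝ) j - (h : ℕ → ℝ) j| by
        rw [this]; rfl]
      rw [hT, coe_sum_single]
      by_cases hj : j ∈ Finset.range n
      · rw [if_pos hj]
        simp only [sub_self, abs_zero]
        linarith
      · rw [if_neg hj]
        have hjN : N ≤ j := by
          by_contra hc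
          exact hj (Finset.mem_range.mpr (lt_of_lt_of_le (not_le.mp hc) hn))
        have := hN j hjN
        rw [sub_zero] at this
        rw [zero_sub, abs_neg]
        exact le_of_lt this
    calc ‖T n - h‖ ≤ ε / 2 := hb
      _ < ε := by linarith
  have h1 : Tendsto (fun n => φ (T n)) atTop (𝓝 (φ h)) :=
    (φ.continuous.tendsto h).comp hTlim
  have h2 : ∀ n, φ (T n) = ∑ i ∈ Finset.range n, (h : ℕ → ℝ) i * x' i := by
    intro n
    rw [hT, map_sum]
    exact Finset.sum_congr rfl fun i _ => phi_single φ i _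
  have h3 : Tendsto (fun n => ∑ i ∈ Finset.range n, (h : ℕ → ℝ) i * x' i) atTop
      (𝓝 (∑' i, (h : ℕ → ℝ) i * x' i)) := hsum.hasSum.tendsto_sum_nat
  refine tendsto_nhds_unique ?_ h3
  simpa only [h2] using h1

set_option maxHeartbeats 1000000 in
set_option synthInstance.maxHeartbeats 400000 in
/-- identifying `c₀** ≅ ℓ∞` (with pointwise product, the Arens product),
an element `f ∈ ℓ∞` multiplies weak-*-to-weak continuously iff `f ∈ c₀`. -/
theorem stmt6 (f : Linfty) :
    (@Continuous _ _ wstarTop weakTop fun g : Linfty => f * g) ↔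
      Tendsto (f : ℕ → ℝ) atTop (𝓝 0) := by
  constructor
  · intro hcont
    by_contra hf
    -- the set c₀ inside ℓ∞
    set C : Set Linfty := {g | Tendsto (g : ℕ → ℝ) atTop (𝓝 0)} with hC
    have hsmul : ∀ (t : ℝ) (g : Linfty), g ∈ C → t • g ∈ C := by
      intro t g hg
      have : ((t • g : Linfty) : ℕ → ℝ) = fun i => t * (g : ℕ → ℝ) i := by
        rw [lp.coeFn_smul]; rfl
      rw [hC, Set.mem_setOf_eq, this]
      simpa using hg.const_mul t
    have hconv : Convex ℝ C := by
      intro g hg g' hg' a b _ _ _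
      have hcoe : ((a • g + b • g' : Linfty) : ℕ → ℝ)
          = fun i => a * (g : ℕ → ℝ) i + b * (g' : ℕ → ℝ) i := by
        rw [lp.coeFn_add, lp.coeFn_smul, lp.coeFn_smul]; rfl
      rw [Set.mem_setOf_eq, hcoe]
      simpa using (hg.const_mul a).add (hg'.const_mul b)
    have hclosed : IsClosed C := by
      refine IsSeqClosed.isClosed fun u g hu hug => ?_
      rw [hC, Set.mem_setOf_eq, Metric.tendsto_atTop]
      intro ε hε
      obtain ⟨k, hk⟩ := (Metric.tendsto_atTop.mp hug) (ε / 2) (by linarith)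
      have hk' : ‖u k - g‖ < ε / 2 := by
        have := hk k le_rfl
        rwa [dist_eq_norm] at this
      obtain ⟨N, hN⟩ := (Metric.tendsto_atTop.mp (hu k)) (ε / 2) (by linarith)
      refine ⟨N, fun i hi => ?_⟩
      have h1 : |(g : ℕ → ℝ) i - (u k : ℕ → ℝ) i| ≤ ‖g - u k‖ := by
        have := lp.norm_apply_le_norm ENNReal.top_ne_zero (g - u k) i
        rwa [show ((g - u k : Linfty) : ℕ → ℝ) i = (g : ℕ → ℝ) i - (u k : ℕ → ℝ) i by
          rw [lp.coeFn_sub]; rfl] at this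
      have h2 : |(u k : ℕ → ℝ) i| < ε / 2 := by
        have := hN i hi
        rwa [Real.dist_eq, sub_zero] at this
      have h3 : ‖g - u k‖ < ε / 2 := by
        rwa [show ‖g - u k‖ = ‖u k - g‖ from norm_sub_rev _ _]
      rw [Real.dist_eq, sub_zero]
      calc |(g : ℕ → ℝ) i|
          ≤ |(g : ℕ → ℝ) i - (u k : ℕ → ℝ) i| + |(u k : ℕ → ℝ) i| := by
            have := abs_sub_abs_le_abs_sub ((g : ℕ → ℝ) i) ((u k : ℕ → ℝ) i)
            linarith [abs_nonneg ((u k : ℕ → ℝ) i)]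
        _ < ε / 2 + ε / 2 := by
            have := lt_of_le_of_lt h1 h3
            linarith
        _ = ε := by ring
    obtain ⟨φ, u, hCu, huf⟩ := geometric_hahn_banach_closed_point hconv hclosed hf
    -- φ vanishes on C
    have hC0 : ∀ g ∈ C, φ g = 0 := by
      intro g hg
      by_contra hne
      have h1 := hCu _ (hsmul ((u + 1) / φ g) g hg)
      rw [map_smul] at h1
      have : (u + 1) / φ g * φ g = u + 1 := div_mul_cancel₀ _ hne
      rw [smul_eq_mul, this] at h1
      linarith
    have hu0 : 0 < u := by
      have h0C : (0 : Linfty) ∈ C := by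
        rw [hC, Set.mem_setOf_eq]
        have : ((0 : Linfty) : ℕ → ℝ) = 0 := lp.coeFn_zero _ _
        rw [this]
        exact tendsto_const_nhds
      have := hCu 0 h0C
      simpa using this
    -- the net of finite truncations of the constant sequence 1
    set G : Finset ℕ → Linfty := fun s => ∑ i ∈ s, lp.single ⊤ i (1 : ℝ) with hG
    have hG1 : Tendsto G atTop (@nhds _ wstarTop 1) := by
      rw [tendsto_wstar]
      intro x
      have hone : ((1 : Linfty) : ℕ → ℝ) = fun _ => 1 := lp.infty_coeFn_one
      have hx : Summable fun i => (x : ℕ → ℝ) i := (lone_summable x).of_norm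
      have h1 : ∀ s : Finset ℕ,
          ∑' i, ((G s : Linfty) : ℕ → ℝ) i * (x : ℕ → ℝ) i = ∑ i ∈ s, (x : ℕ → ℝ) i := by
        intro s
        rw [tsum_eq_sum (s := s) (fun i hi => by rw [hG, coe_sum_single, if_neg hi, zero_mul])]
        refine Finset.sum_congr rfl fun i hi => ?_
        rw [hG, coe_sum_single, if_pos hi, one_mul]
      have h2 : (∑' i, ((1 : Linfty) : ℕ → ℝ) i * (x : ℕ → ℝ) i)
          = ∑' i, (x : ℕ → ℝ) i := by
        refine tsum_congr fun i => ?_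
        rw [hone]
        ring
      simp only [h1, h2]
      exact hx.hasSum
    have hMG : Tendsto (fun s => f * G s) atTop (@nhds _ weakTop f) := by
      have := (@Continuous.tendsto _ _ wstarTop weakTop _ hcont (1 : Linfty)).comp hG1
      simpa [mul_one, Function.comp_def] using this
    have hmem : ∀ s : Finset ℕ, f * G s ∈ C := by
      intro s
      rw [hC, Set.mem_setOf_eq]
      have hev : ∀ᶠ i in atTop, (0 : ℝ) = ((f * G s : Linfty) : ℕ → ℝ) i := by
        filter_upwards [eventually_gt_atTop (s.sup id)] with i hi
        have hns : i ∉ s := fun his => absurd (Finset.le_sup (f := id) his) (not_le.mpr hi)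
        have : ((f * G s : Linfty) : ℕ → ℝ) i = (f : ℕ → ℝ) i * ((G s : Linfty) : ℕ → ℝ) i := by
          rw [lp.infty_coeFn_mul]; rfl
        rw [this, hG, coe_sum_single, if_neg hns, mul_zero]
      exact tendsto_const_nhds.congr' hev
    have hlim := (tendsto_weak.mp hMG) φ
    have hzero : (fun s => φ (f * G s)) = fun _ => (0 : ℝ) :=
      funext fun s => hC0 _ (hmem s)
    rw [hzero] at hlim
    have : φ f = 0 := (tendsto_nhds_unique tendsto_const_nhds hlim).symm
    linarith
  · intro hf
    unfold weakTop
    refine continuous_iInf_rng.mpr fun φ => continuous_induced_rng.mpr ?_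
    show @Continuous _ _ wstarTop _ fun g : Linfty => φ (f * g)
    obtain ⟨x, hx⟩ := phi_repr φ
    have hfg : ∀ g : Linfty, Tendsto ((f * g : Linfty) : ℕ → ℝ) atTop (𝓝 0) := by
      intro g
      refine squeeze_zero_norm (fun i => ?_) (by simpa using hf.norm.const_mul ‖g‖)
      have : ((f * g : Linfty) : ℕ → ℝ) i = (f : ℕ → ℝ) i * (g : ℕ → ℝ) i := by
        rw [lp.infty_coeFn_mul]; rfl
      rw [this, norm_mul]
      calc ‖(f : ℕ → ℝ) i‖ * ‖(g : ℕ → ℝ) i‖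
          ≤ ‖(f : ℕ → ℝ) i‖ * ‖g‖ := by
            exact mul_le_mul_of_nonneg_left (lp.norm_apply_le_norm ENNReal.top_ne_zero g i)
              (norm_nonneg _)
        _ = ‖g‖ * ‖(f : ℕ → ℝ) i‖ := mul_comm _ _
    have hy1 : Memℓp (fun i => (f : ℕ → ℝ) i * (x : ℕ → ℝ) i) 1 := by
      refine memℓp_gen ?_
      have : Summable fun i => ‖(f : ℕ → ℝ) i * (x : ℕ → ℝ) i‖ := by
        refine Summable.of_nonneg_of_le (fun i => norm_nonneg _) (fun i => ?_)
          ((lone_summable x).mul_left ‖f‖)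
        rw [norm_mul]
        exact mul_le_mul_of_nonneg_right (lp.norm_apply_le_norm ENNReal.top_ne_zero f i)
          (norm_nonneg _)
      simpa using this
    set y : Lone := ⟨fun i => (f : ℕ → ℝ) i * (x : ℕ → ℝ) i, hy1⟩ with hy
    have heq : (fun g : Linfty => φ (f * g))
        = fun g : Linfty => ∑' i, (g : ℕ → ℝ) i * (y : ℕ → ℝ) i := by
      funext g
      rw [hx (f * g) (hfg g)]
      refine tsum_congr fun i => ?_
      have : ((f * g : Linfty) : ℕ → ℝ) i = (f : ℕ → ℝ) i * (g : ℕ → ℝ) i := by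
        rw [lp.infty_coeFn_mul]; rfl
      rw [this]
      have hyc : ((y : Lone) : ℕ → ℝ) i = (f : ℕ → ℝ) i * (x : ℕ → ℝ) i := rfl
      rw [hyc]
      ring
    rw [heq]
    unfold wstarTop
    exact continuous_iInf_dom (i := y) continuous_induced_dom

end
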